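/- Let K be an imaginary quadratic field with ring of integers O_K, and let α, β, δ, γ ∈ O_K with αδ - βγ = 1. Consider the lattice Λ = βℤ + δℤ ⊂ ℂ. If p is a rational prime dividing all three of N(β), N(δ), and N(β+δ), where N is the field norm, then a contradiction arises; i.e., no rational prime divides all three norms N(β), N(δ), N(β+δ). -/
import Mathlib

open NumberField

lemma aux_two_embeddings (K : Type*) [Field K] [NumberField K]
    (hdeg : Module.finrank ℚ K = 2) :
    ∃ φ₁ φ₂ : K →ₐ[ℚ] ℂ, φ₁ ≠ φ₂ ∧ ∀ φ : K →ₐ[ℚ] ℂ, φ = φ₁ ∨ φ = φ₂ := by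
  have hcard : Nat.card (K →ₐ[ℚ] ℂ) = 2 := by
    rw [Nat.card_eq_fintype_card, AlgHom.card, hdeg]
  obtain ⟨φ₁, φ₂, hne, huniv⟩ := Nat.card_eq_two_iff.mp hcard
  refine ⟨φ₁, φ₂, hne, fun φ => ?_⟩
  have : φ ∈ ({φ₁, φ₂} : Set (K →ₐ[ℚ] ℂ)) := huniv ▸ Set.mem_univ φ
  simpa using this

/-- In the ring of integers of an imaginary quadratic field, if `αδ - βγ = 1`
then no rational prime divides all three of `N(β)`, `N(δ)`, `N(β+δ)`. -/
theorem stmt_8 (K : Type*) [Field K] [NumberField K]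
    (hdeg : Module.finrank ℚ K = 2)
    (him : ∀ v : InfinitePlace K, v.IsComplex)
    (α β γ δ : 𝓞 K) (h : α * δ - β * γ = 1)
    (p : ℕ) (hp : p.Prime) :
    ¬((p : ℤ) ∣ Algebra.norm ℤ β ∧ (p : ℤ) ∣ Algebra.norm ℤ δ ∧
      (p : ℤ) ∣ Algebra.norm ℤ (β + δ)) := by
  classical
  rintro ⟨h1, h2, h3⟩
  obtain ⟨φ₁, φ₂, hne, hall⟩ := aux_two_embeddings K hdeg
  have huniv : (Finset.univ : Finset (K →ₐ[ℚ] ℂ)) = {φ₁, φ₂} := by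
    ext φ
    simpa using hall φ
  -- the conjugation on K
  set sK : K → K := fun z => algebraMap ℚ K (Algebra.trace ℚ K z) - z with hsK
  have hφ1 : ∀ z : K, φ₁ (sK z) = φ₂ z := by
    intro z
    have := trace_eq_sum_embeddings (K := ℚ) (L := K) ℂ (x := z)
    rw [huniv, Finset.sum_pair hne] at this
    simp only [hsK, map_sub, AlgHom.commutes]
    rw [this]; ring
  have hinj : Function.Injective φ₁ := φ₁.toRingHom.injective
  have hmul : ∀ z w : K, sK (z * w) = sK z * sK w := by
    intro z w
    apply hinj
    rw [map_mul, hφ1, hφ1, hφ1, map_mul]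
  have hnorm : ∀ z : K, z * sK z = algebraMap ℚ K (Algebra.norm ℚ z) := by
    intro z
    apply hinj
    have := Algebra.norm_eq_prod_embeddings ℚ ℂ (x := z)
    rw [huniv, Finset.prod_pair hne] at this
    rw [map_mul, hφ1, AlgHom.commutes, ← this]
  -- descend conjugation to 𝓞 K
  set s : 𝓞 K → 𝓞 K := fun x => algebraMap ℤ (𝓞 K) (Algebra.trace ℤ (𝓞 K) x) - x with hs
  have hcoe : ∀ x : 𝓞 K, ((s x : 𝓞 K) : K) = sK (x : K) := by
    intro x
    simp only [hs, hsK, map_sub]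
    congr 1
    rw [← Algebra.coe_trace_int]
    push_cast
    simp
  have hOinj : Function.Injective (algebraMap (𝓞 K) K) :=
    RingOfIntegers.coe_injective
  have hcoe' : ∀ x : 𝓞 K, algebraMap (𝓞 K) K (s x) = sK (algebraMap (𝓞 K) K x) := hcoe
  have hsmul : ∀ x y : 𝓞 K, s (x * y) = s x * s y := by
    intro x y
    apply hOinj
    rw [hcoe', map_mul, map_mul, hcoe', hcoe', hmul]
  have hssub : ∀ x y : 𝓞 K, s (x - y) = s x - s y := by
    intro x y; simp only [hs, map_sub]; ring
  have hsone : s 1 = 1 := by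
    apply hOinj
    have h1K : sK (1 : K) = 1 := by
      apply hinj; rw [hφ1, map_one, map_one]
    rw [hcoe', map_one]; exact h1K
  have hxnorm : ∀ x : 𝓞 K, x * s x = algebraMap ℤ (𝓞 K) (Algebra.norm ℤ x) := by
    intro x
    apply hOinj
    rw [map_mul, hcoe', hnorm]
    rw [show algebraMap (𝓞 K) K (algebraMap ℤ (𝓞 K) (Algebra.norm ℤ x))
        = ((Algebra.norm ℤ x : 𝓞 K) : K) by push_cast; simp]
    rw [show ((Algebra.norm ℤ x : 𝓞 K) : K) = algebraMap ℚ K ((Algebra.norm ℤ x : ℚ)) by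
        push_cast; simp]
    rw [Algebra.coe_norm_int]
  -- p is not a unit in 𝓞 K
  have hpnonunit : ¬ IsUnit ((p : ℤ) : 𝓞 K) := by
    intro hu
    rw [NumberField.isUnit_iff_norm, RingOfIntegers.coe_norm] at hu
    rw [show (((p : ℤ) : 𝓞 K) : K) = algebraMap ℚ K ((p : ℚ)) by push_cast; simp] at hu
    rw [Algebra.norm_algebraMap, hdeg] at hu
    have hp2 : (2 : ℚ) ≤ (p : ℚ) := by exact_mod_cast hp.two_le
    rw [abs_eq (by norm_num : (0:ℚ) ≤ 1)] at hu
    rcases hu with h' | h' <;> nlinarith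
  have hne_top : Ideal.span {((p : ℤ) : 𝓞 K)} ≠ ⊤ := by
    rw [Ne, Ideal.span_singleton_eq_top]; exact hpnonunit
  obtain ⟨P, hPmax, hPle⟩ := Ideal.exists_le_maximal _ hne_top
  have hpP : ((p : ℤ) : 𝓞 K) ∈ P := hPle (Ideal.subset_span rfl)
  have hPprime : P.IsPrime := hPmax.isPrime
  -- norms land in P
  have hNmem : ∀ x : 𝓞 K, (p : ℤ) ∣ Algebra.norm ℤ x → x * s x ∈ P := by
    intro x hx
    obtain ⟨c, hc⟩ := hx
    rw [hxnorm, hc, map_mul]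
    refine P.mul_mem_right _ ?_
    rw [show algebraMap ℤ (𝓞 K) ((p : ℤ)) = ((p : ℤ) : 𝓞 K) by simp]
    exact hpP
  have hβ := hPprime.mem_or_mem (hNmem β h1)
  have hδ := hPprime.mem_or_mem (hNmem δ h2)
  have hβδ := hPprime.mem_or_mem (hNmem (β + δ) h3)
  have hsadd : s (β + δ) = s β + s δ := by
    simp only [hs, map_add]; ring
  rw [hsadd] at hβδ
  -- contradictions
  have contra1 : β ∈ P → δ ∈ P → False := by
    intro hb hd
    apply hPmax.ne_top
    rw [Ideal.eq_top_iff_one, ← h]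
    exact P.sub_mem (P.mul_mem_left α hd) (P.mul_mem_right γ hb)
  have contra2 : s β ∈ P → s δ ∈ P → False := by
    intro hb hd
    apply hPmax.ne_top
    rw [Ideal.eq_top_iff_one]
    have key : s α * s δ - s β * s γ = 1 := by
      rw [← hsmul, ← hsmul, ← hssub, h, hsone]
    rw [← key]
    exact P.sub_mem (P.mul_mem_left (s α) hd) (P.mul_mem_right (s γ) hb)
  rcases hβ with hb | hb <;> rcases hδ with hd | hd
  · exact contra1 hb hd
  · rcases hβδ with he | he
    · exact contra1 hb (by simpa using P.sub_mem he hb)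
    · exact contra2 (by simpa using P.sub_mem he hd) hd
  · rcases hβδ with he | he
    · exact contra1 (by simpa using P.sub_mem he hd) hd
    · exact contra2 hb (by simpa using P.sub_mem he hb)
  · exact contra2 hb hd
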